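/- VCG pivot transfers make truthful reporting optimal: for each player i with type θᵢ, suppose the mechanism chooses the allocation a*(m) maximizing total reported welfare W(a, m) = Σⱼ vⱼ(a, mⱼ), and pays player i the transfer Tᵢ(m) = Σ_{j≠i} vⱼ(a*(m), mⱼ) − hᵢ(m₋ᵢ) for some function hᵢ of others' reports. Then for every profile of others' reports m₋ᵢ and every misreport mᵢ', player i's utility vᵢ(a*(θᵢ, m₋ᵢ), θᵢ) + Tᵢ(θᵢ, m₋ᵢ) ≥ vᵢ(a*(mᵢ', m₋ᵢ), θᵢ) + Tᵢ(mᵢ', m₋ᵢ). -/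
import Mathlib


open Finset

/-- VCG pivot transfers make truthful reporting ex post optimal. -/
theorem vcg_truthful
    {ι : Type*} [Fintype ι] [DecidableEq ι]
    {A : Type*} {Θ : ι → Type*}
    (v : ∀ i, A → Θ i → ℝ)
    (astar : (∀ i, Θ i) → A)
    (hastar : ∀ (m : ∀ i, Θ i) (a : A),
      ∑ j, v j a (m j) ≤ ∑ j, v j (astar m) (m j))
    (h : ∀ i, (∀ j, Θ j) → ℝ)
    (hh : ∀ i (m m' : ∀ j, Θ j), (∀ j, j ≠ i → m j = m' j) → h i m = h i m')
    (T : ∀ _ : ι, (∀ j, Θ j) → ℝ)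
    (hT : ∀ i (m : ∀ j, Θ j),
      T i m = (∑ j ∈ univ.erase i, v j (astar m) (m j)) - h i m)
    (i : ι) (θi : Θ i) (mi' : Θ i) (m : ∀ j, Θ j) :
    v i (astar (Function.update m i mi')) θi + T i (Function.update m i mi') ≤
      v i (astar (Function.update m i θi)) θi + T i (Function.update m i θi) := by
  set mt := Function.update m i θi with hmt
  set mf := Function.update m i mi' with hmf
  have hoff : ∀ j, j ≠ i → mf j = mt j := by
    intro j hj
    simp [hmt, hmf, Function.update_of_ne hj]
  have hhe : h i mf = h i mt := hh i mf mt hoff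
  rw [hT, hT, hhe]
  have key : ∀ (a : A), v i a θi + ∑ j ∈ univ.erase i, v j a (mf j)
      = ∑ j, v j a (mt j) := by
    intro a
    rw [Finset.sum_congr rfl (fun j hj => by
      rw [hoff j (Finset.ne_of_mem_erase hj)])]
    rw [← Finset.add_sum_erase _ _ (Finset.mem_univ i)]
    simp [hmt]
  have h1 : v i (astar mf) θi + ∑ j ∈ univ.erase i, v j (astar mf) (mf j)
      ≤ v i (astar mt) θi + ∑ j ∈ univ.erase i, v j (astar mt) (mt j) := by
    rw [key (astar mf)]
    have := hastar mt (astar mf)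
    have h2 : v i (astar mt) θi + ∑ j ∈ univ.erase i, v j (astar mt) (mt j)
        = ∑ j, v j (astar mt) (mt j) := by
      rw [← Finset.add_sum_erase _ _ (Finset.mem_univ i)]
      simp [hmt]
    rw [h2]; exact this
  linarith
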